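/- Let α₁, …, αₙ be a finite sequence of countable ordinals with a unique maximum α₁ (i.e. α₁ > αᵢ for all i ≥ 2). Then the topological disjoint union [0, ω^{α₁}] ⊔ ⋯ ⊔ [0, ω^{αₙ}] is homeomorphic to [0, ω^{α₁}]. -/

import Mathlib

open Ordinal

namespace Stmt3Aux

instance instCompactIic (a : Ordinal.{0}) : CompactSpace (Set.Iic a) := by
  rw [← Set.Icc_bot]
  exact isCompact_iff_compactSpace.1 isCompact_Icc

/-- `[0,a] ⊔ [0,b]` is homeomorphic to `[0, a + 1 + b]`. -/
theorem sum_homeo (a b : Ordinal.{0}) :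
    Nonempty ((Set.Iic a ⊕ Set.Iic b) ≃ₜ Set.Iic (a + 1 + b)) := by
  have hcont : Continuous (fun z : Ordinal.{0} => a + 1 + z) :=
    (isNormal_add_right (a + 1)).continuous
  have hle : a ≤ a + 1 + b := le_trans le_self_add le_self_add
  set f : Set.Iic a ⊕ Set.Iic b → Set.Iic (a + 1 + b) := Sum.elim
      (fun x => ⟨x.1, le_trans x.2 hle⟩)
      (fun y => ⟨a + 1 + y.1, Set.mem_Iic.2 (add_le_add_right y.2 (a + 1))⟩) with hf
  have hbij : Function.Bijective f := by
    constructor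
    · rintro (x | x) (y | y) h <;> simp only [hf, Sum.elim_inl, Sum.elim_inr,
        Subtype.mk.injEq] at h
      · exact congrArg Sum.inl (Subtype.ext (by have h' := congrArg Subtype.val h; exact h'))
      · exact absurd (congrArg Subtype.val h) (ne_of_lt (lt_of_le_of_lt x.2
          (lt_of_lt_of_le (lt_add_one a) le_self_add)))
      · exact absurd (congrArg Subtype.val h).symm (ne_of_lt (lt_of_le_of_lt y.2
          (lt_of_lt_of_le (lt_add_one a) le_self_add)))
      · exact congrArg Sum.inr (Subtype.ext ((add_left_cancel h)))
    · rintro ⟨z, hz⟩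
      by_cases h : z ≤ a
      · exact ⟨Sum.inl ⟨z, h⟩, rfl⟩
      · have h1 : a + 1 ≤ z := by
          rw [Ordinal.add_one_eq_succ, Order.succ_le_iff]
          exact lt_of_not_ge h
        have h2 : a + 1 + (z - (a + 1)) = z := Ordinal.add_sub_cancel_of_le h1
        have h3 : z - (a + 1) ≤ b := by
          rw [← add_le_add_iff_left (a + 1), h2]; exact hz
        exact ⟨Sum.inr ⟨z - (a + 1), h3⟩, Subtype.ext h2⟩
  have hcf : Continuous f :=
    Continuous.sumElim (Continuous.subtype_mk continuous_subtype_val _)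
      (Continuous.subtype_mk (hcont.comp continuous_subtype_val) _)
  exact ⟨Continuous.homeoOfEquivCompactToT2 (f := Equiv.ofBijective f hbij) hcf⟩

/-- Splitting off the last summand of a finite disjoint union. -/
def sigmaLast {n : ℕ} (X : Fin (n + 1) → Type*) [∀ i, TopologicalSpace (X i)] :
    (Σ i : Fin (n + 1), X i) ≃ₜ ((Σ i : Fin n, X i.castSucc) ⊕ X (Fin.last n)) where
  toFun p := Fin.lastCases (motive := fun i => X i → ((Σ i : Fin n, X i.castSucc) ⊕ X (Fin.last n)))
      Sum.inr (fun j x => Sum.inl ⟨j, x⟩) p.1 p.2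
  invFun := Sum.elim (fun q => ⟨q.1.castSucc, q.2⟩) (fun x => ⟨Fin.last n, x⟩)
  left_inv := by
    rintro ⟨i, x⟩
    induction i using Fin.lastCases with
    | last => simp
    | cast j => simp
  right_inv := by
    rintro (⟨j, x⟩ | x) <;> simp
  continuous_toFun := by
    apply continuous_sigma
    intro i
    induction i using Fin.lastCases with
    | last =>
      simp only [Fin.lastCases_last]
      exact continuous_inr
    | cast j =>
      simp only [Fin.lastCases_castSucc]
      exact continuous_inl.comp (continuous_sigmaMk (i := j))
  continuous_invFun :=
    Continuous.sumElim (continuous_sigma fun j => continuous_sigmaMk) continuous_sigmaMk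

/-- The disjoint union with a single summand. -/
def sigmaOne (X : Fin 1 → Type*) [∀ i, TopologicalSpace (X i)] :
    (Σ i : Fin 1, X i) ≃ₜ X 0 where
  toFun p := Fin.cases (motive := fun i => X i → X 0) id (fun j => j.elim0) p.1 p.2
  invFun x := ⟨0, x⟩
  left_inv := by
    rintro ⟨i, x⟩
    induction i using Fin.cases with
    | zero => simp
    | succ j => exact j.elim0
  right_inv x := rfl
  continuous_toFun := by
    apply continuous_sigma
    intro i
    induction i using Fin.cases with
    | zero => exact continuous_id
    | succ j => exact j.elim0
  continuous_invFun := continuous_sigmaMk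

theorem aux : ∀ (n : ℕ) (β : Fin (n + 1) → Ordinal.{0}),
    (∀ i, i ≠ 0 → β i < β 0) →
    Nonempty ((Σ i : Fin (n + 1), (Set.Iic (omega0 ^ β i))) ≃ₜ (Set.Iic (omega0 ^ β 0))) := by
  intro n
  induction n with
  | zero =>
    intro β _
    exact ⟨sigmaOne fun i => ↥(Set.Iic (omega0 ^ β i))⟩
  | succ m IH =>
    intro β hmax
    have hlast0 : (Fin.last (m + 1)) ≠ 0 := by
      simp [Fin.ext_iff]
    have h1 : β (Fin.last (m + 1)) < β 0 := hmax _ hlast0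
    have hβ0pos : 0 < β 0 := pos_of_gt h1
    -- tail
    obtain ⟨e2⟩ := IH (fun i => β i.castSucc) (fun i hi => by
      have : (i.castSucc : Fin (m + 2)) ≠ 0 := by
        rw [← Fin.castSucc_zero]; exact fun h => hi (Fin.castSucc_injective _ h)
      simpa using hmax i.castSucc this)
    obtain ⟨e4⟩ := sum_homeo (omega0 ^ β (Fin.last (m + 1))) (omega0 ^ β 0)
    have habs : omega0 ^ β (Fin.last (m + 1)) + 1 + omega0 ^ β 0 = omega0 ^ β 0 := by
      have h2 : (1 : Ordinal) + omega0 ^ β 0 = omega0 ^ β 0 := by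
        apply add_absorp (b := β 0) _ le_rfl
        calc (1 : Ordinal) = omega0 ^ (0 : Ordinal) := (opow_zero _).symm
        _ < omega0 ^ β 0 := (opow_lt_opow_iff_right one_lt_omega0).2 hβ0pos
      rw [add_assoc, h2]
      exact add_absorp ((opow_lt_opow_iff_right one_lt_omega0).2 h1) le_rfl
    rw [habs] at e4
    have e1 := sigmaLast fun i : Fin (m + 2) => ↥(Set.Iic (omega0 ^ β i))
    have hc0 : (Fin.castSucc (0 : Fin (m + 1))) = (0 : Fin (m + 2)) := Fin.castSucc_zero
    rw [hc0] at e2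
    exact ⟨e1.trans (((Homeomorph.sumCongr e2 (Homeomorph.refl _)).trans
      (Homeomorph.sumComm _ _)).trans e4)⟩

end Stmt3Aux

/-- If `α₁ > αᵢ` for all `i ≥ 2` (all countable), then the topological disjoint union
`[0,ω^{α₁}] ⊔ ⋯ ⊔ [0,ω^{αₙ}]` is homeomorphic to `[0,ω^{α₁}]`, where ordinal intervals
carry the topology induced from the order topology on ordinals. -/
theorem stmt3 (n : ℕ) (hn : 1 ≤ n) (α : Fin n → Ordinal.{0})
    (hcount : ∀ i, (α i).card ≤ Cardinal.aleph0)
    (hmax : ∀ i : Fin n, i ≠ ⟨0, hn⟩ → α i < α ⟨0, hn⟩) :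
    Nonempty ((Σ i : Fin n, (Set.Iic (omega0 ^ α i))) ≃ₜ (Set.Iic (omega0 ^ α ⟨0, hn⟩))) := by
  obtain ⟨m, rfl⟩ : ∃ m, n = m + 1 := ⟨n - 1, (Nat.succ_pred_eq_of_pos hn).symm⟩
  have h0 : (⟨0, hn⟩ : Fin (m + 1)) = 0 := rfl
  rw [h0] at hmax ⊢
  exact Stmt3Aux.aux m α hmax
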